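/- arXiv:1312.7804 — 3 statements merged into one kernel-verified Lean document; each statement's English description precedes it below -/
import Mathlib

section
/- For a self-adjoint operator H₀ and a bounded self-adjoint operator W on a Hilbert space, one has the operator inequality (1 + (H₀+W)²)⁻¹ ≤ (1 + ‖W‖ + ‖W‖²)·(1 + H₀²)⁻¹. -/
lemma aux_smul_nonneg {ℋ : Type*} [NormedAddCommGroup ℋ] [InnerProductSpace ℂ ℋ]
    [CompleteSpace ℋ] {T : ℋ →L[ℂ] ℋ} (hT : 0 ≤ T) {c : ℝ} (hc : 0 ≤ c) :
    0 ≤ c • T := by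
  rw [ContinuousLinearMap.nonneg_iff_isPositive] at hT ⊢
  constructor
  · exact ContinuousLinearMap.isSelfAdjoint_iff_isSymmetric.mp (by
      rw [IsSelfAdjoint, star_smul, star_trivial,
        (ContinuousLinearMap.isSelfAdjoint_iff_isSymmetric.mpr hT.1).star_eq])
  · intro x
    have : (c • T).reApplyInnerSelf x = c * T.reApplyInnerSelf x := by
      simp only [ContinuousLinearMap.reApplyInnerSelf, ContinuousLinearMap.smul_apply,
        RCLike.real_smul_eq_coe_smul (K := ℂ), inner_smul_real_left, RCLike.smul_re,
        smul_eq_mul, RCLike.re_ofReal_mul]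
    rw [this]
    exact mul_nonneg hc (hT.2 x)

lemma aux_sq_nonneg {ℋ : Type*} [NormedAddCommGroup ℋ] [InnerProductSpace ℂ ℋ]
    [CompleteSpace ℋ] {X : ℋ →L[ℂ] ℋ} (hX : IsSelfAdjoint X) : (0 : ℋ →L[ℂ] ℋ) ≤ X ^ 2 := by
  have := star_mul_self_nonneg X
  rwa [hX.star_eq, ← sq] at this

lemma aux_mul_self_le {ℋ : Type*} [NormedAddCommGroup ℋ] [InnerProductSpace ℂ ℋ]
    [CompleteSpace ℋ] {W : ℋ →L[ℂ] ℋ} (hW : IsSelfAdjoint W) :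
    W ^ 2 ≤ (‖W‖ ^ 2 : ℝ) • (1 : ℋ →L[ℂ] ℋ) := by
  rw [ContinuousLinearMap.le_def]
  have hsa : IsSelfAdjoint ((‖W‖ ^ 2 : ℝ) • (1 : ℋ →L[ℂ] ℋ)) := by
    rw [IsSelfAdjoint, star_smul, star_trivial, star_one]
  refine ⟨ContinuousLinearMap.isSelfAdjoint_iff_isSymmetric.mp (hsa.sub (hW.pow 2)), fun x => ?_⟩
  have hsym := (ContinuousLinearMap.isSelfAdjoint_iff_isSymmetric.mp hW)
  have hWx : ((W ^ 2) x) = W (W x) := by rw [pow_two]; rfl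
  have h1 : ((‖W‖ ^ 2 : ℝ) • (1 : ℋ →L[ℂ] ℋ) - W ^ 2).reApplyInnerSelf x
      = ‖W‖ ^ 2 * ‖x‖ ^ 2 - ‖W x‖ ^ 2 := by
    simp only [ContinuousLinearMap.reApplyInnerSelf, ContinuousLinearMap.sub_apply,
      ContinuousLinearMap.smul_apply, ContinuousLinearMap.one_apply, inner_sub_left, map_sub, hWx]
    have h2 := hsym (W x) x
    simp only [ContinuousLinearMap.coe_coe] at h2
    rw [h2]
    simp only [RCLike.real_smul_eq_coe_smul (K := ℂ), inner_smul_real_left, RCLike.smul_re,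
      smul_eq_mul, RCLike.re_ofReal_mul, inner_self_eq_norm_sq]
  rw [h1]
  have := W.le_opNorm x
  nlinarith [norm_nonneg (W x), norm_nonneg x, norm_nonneg W]

set_option synthInstance.maxHeartbeats 400000
set_option maxHeartbeats 1000000
/-- For a (bounded) self-adjoint operator `H₀` and a bounded self-adjoint operator `W` on a
Hilbert space, with `A = (1 + (H₀+W)²)⁻¹` and `B = (1 + H₀²)⁻¹` (characterized as two-sided
inverses), one has the operator inequality
`(1 + (H₀+W)²)⁻¹ ≤ (1 + ‖W‖ + ‖W‖²)·(1 + H₀²)⁻¹` in the Loewner order. -/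
theorem resolvent_sq_le_of_add_bounded
    {ℋ : Type*} [NormedAddCommGroup ℋ] [InnerProductSpace ℂ ℋ] [CompleteSpace ℋ]
    (H₀ W A B : ℋ →L[ℂ] ℋ) (hH₀ : IsSelfAdjoint H₀) (hW : IsSelfAdjoint W)
    (hA₁ : (1 + (H₀ + W) ^ 2) * A = 1) (hA₂ : A * (1 + (H₀ + W) ^ 2) = 1)
    (hB₁ : (1 + H₀ ^ 2) * B = 1) (hB₂ : B * (1 + H₀ ^ 2) = 1) :
    (((1 : ℝ) + ‖W‖ + ‖W‖ ^ 2) • B - A).IsPositive := by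
  by_cases hW0 : W = 0
  · subst hW0
    have hAB : A = B := by
      calc A = (B * (1 + H₀ ^ 2)) * A := by rw [hB₂, one_mul]
      _ = B * ((1 + (H₀ + 0) ^ 2) * A) := by rw [mul_assoc, add_zero]
      _ = B := by rw [hA₁, mul_one]
    simp only [hAB, norm_zero]
    norm_num
  · set K := H₀ + W with hKdef
    have hK : IsSelfAdjoint K := hH₀.add hW
    set ε : ℝ := ‖W‖ with hεdef
    have hε : 0 < ε := norm_pos_iff.mpr hW0
    set c : ℝ := 1 + ε + ε ^ 2 with hcdef
    have hc : (0:ℝ) < c := by positivity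
    set s : ℝ := Real.sqrt ε with hsdef
    have hs : 0 < s := Real.sqrt_pos.mpr hε
    -- cross term inequality
    have hYsa : IsSelfAdjoint (s • K + s⁻¹ • W) :=
      (IsSelfAdjoint.smul (star_trivial s) hK).add (IsSelfAdjoint.smul (star_trivial s⁻¹) hW)
    have hY : (0 : ℋ →L[ℂ] ℋ) ≤ ε • K ^ 2 + (K * W + W * K) + ε⁻¹ • W ^ 2 := by
      have h0 := aux_sq_nonneg hYsa
      have hexp : (s • K + s⁻¹ • W) ^ 2
          = ε • K ^ 2 + (K * W + W * K) + ε⁻¹ • W ^ 2 := by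
        rw [sq, add_mul, mul_add, mul_add, smul_mul_smul_comm, smul_mul_smul_comm,
          smul_mul_smul_comm, smul_mul_smul_comm]
        rw [Real.mul_self_sqrt hε.le, mul_inv_cancel₀ hs.ne', inv_mul_cancel₀ hs.ne',
          ← Real.sqrt_inv, Real.mul_self_sqrt (by positivity), one_smul, one_smul, ← sq, ← sq]
        abel
      rwa [hexp] at h0
    -- W^2 ≤ ε² • 1
    have hWsq : W ^ 2 ≤ (ε ^ 2 : ℝ) • (1 : ℋ →L[ℂ] ℋ) := aux_mul_self_le hW
    have hH2 : H₀ ^ 2 = K ^ 2 - (K * W + W * K) + W ^ 2 := by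
      have : H₀ = K - W := by rw [hKdef]; abel
      rw [this]; noncomm_ring
    -- key inequality : 1 + H₀² ≤ c • (1 + K²)
    have key : (1 : ℋ →L[ℂ] ℋ) + H₀ ^ 2 ≤ c • (1 + K ^ 2) := by
      rw [← sub_nonneg]
      have hid : c • ((1 : ℋ →L[ℂ] ℋ) + K ^ 2) - (1 + H₀ ^ 2)
          = (ε • K ^ 2 + (K * W + W * K) + ε⁻¹ • W ^ 2)
            + (ε ^ 2) • K ^ 2
            + ((ε : ℝ) • (1 : ℋ →L[ℂ] ℋ) - ε⁻¹ • W ^ 2)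
            + ((ε ^ 2 : ℝ) • (1 : ℋ →L[ℂ] ℋ) - W ^ 2) := by
        rw [hH2, hcdef]
        module
      rw [hid]
      have h3 : (0:ℋ →L[ℂ] ℋ) ≤ (ε ^ 2) • K ^ 2 :=
        aux_smul_nonneg (aux_sq_nonneg hK) (by positivity)
      have h4a : (0:ℋ →L[ℂ] ℋ) ≤ (ε : ℝ) • (1 : ℋ →L[ℂ] ℋ) - ε⁻¹ • W ^ 2 := by
        have h5 := aux_smul_nonneg (sub_nonneg.mpr hWsq) (le_of_lt (inv_pos.mpr hε))
        rw [smul_sub, smul_smul] at h5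
        rwa [show ε⁻¹ * ε ^ 2 = ε by field_simp] at h5
      have h4b : (0:ℋ →L[ℂ] ℋ) ≤ (ε ^ 2 : ℝ) • (1 : ℋ →L[ℂ] ℋ) - W ^ 2 :=
        sub_nonneg.mpr hWsq
      exact add_nonneg (add_nonneg (add_nonneg hY h3) h4a) h4b
    -- invert
    have hS0 : (0:ℋ →L[ℂ] ℋ) ≤ 1 + H₀ ^ 2 :=
      add_nonneg (ContinuousLinearMap.nonneg_iff_isPositive _ |>.mpr
        ContinuousLinearMap.isPositive_one) (aux_sq_nonneg hH₀)
    let u : (ℋ →L[ℂ] ℋ)ˣ := ⟨1 + K ^ 2, A, hA₁, hA₂⟩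
    let v : (ℋ →L[ℂ] ℋ)ˣ :=
      ⟨c⁻¹ • (1 + H₀ ^ 2), c • B,
        by rw [smul_mul_smul_comm, hB₁, inv_mul_cancel₀ hc.ne', one_smul],
        by rw [smul_mul_smul_comm, hB₂, mul_inv_cancel₀ hc.ne', one_smul]⟩
    have hv0 : (0:ℋ →L[ℂ] ℋ) ≤ (v : ℋ →L[ℂ] ℋ) := aux_smul_nonneg hS0 (by positivity)
    have hvu : (v : ℋ →L[ℂ] ℋ) ≤ (u : ℋ →L[ℂ] ℋ) := by
      show c⁻¹ • ((1:ℋ →L[ℂ] ℋ) + H₀ ^ 2) ≤ 1 + K ^ 2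
      have h5 := aux_smul_nonneg (sub_nonneg.mpr key) (le_of_lt (inv_pos.mpr hc))
      rw [smul_sub, smul_smul, inv_mul_cancel₀ hc.ne', one_smul] at h5
      exact sub_nonneg.mp h5
    have hfin := CStarAlgebra.inv_le_inv hv0 hvu
    have hfin' : A ≤ c • B := hfin
    rw [← ContinuousLinearMap.nonneg_iff_isPositive]
    exact sub_nonneg.mpr hfin'
end

section
/- Let H₀ be a self-adjoint n×n matrix with eigenvalues μ₁,…,μ_n (counting multiplicity) and orthonormal eigenbasis ψ₁,…,ψ_n, let V be a self-adjoint n×n matrix, and let f : ℝ → ℝ be continuously differentiable. Then the first-order trace formula holds: (d/dt)|_{t=0} Tr f(H₀ + tV) = Σ_{i=1}^{n} f'(μ_i)·⟨Vψ_i, ψ_i⟩. -/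
open scoped Classical in
/-- The matrix function `f(A)` of a Hermitian matrix `A`, defined by the spectral theorem
(functional calculus); junk value `0` if `A` is not Hermitian. -/
noncomputable def matFun {n : Type*} [Fintype n] [DecidableEq n]
    (f : ℝ → ℝ) (A : Matrix n n ℂ) : Matrix n n ℂ :=
  if hA : A.IsHermitian then
    (Matrix.IsHermitian.eigenvectorUnitary hA : Matrix n n ℂ) *
      Matrix.diagonal (fun i => (f (hA.eigenvalues i) : ℂ)) *
      star (Matrix.IsHermitian.eigenvectorUnitary hA : Matrix n n ℂ)
  else 0

section Aux

open scoped InnerProductSpace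

/-- Trace of `matFun f A` is the sum of `f` over eigenvalues. -/
lemma traceMatFun {n : Type*} [Fintype n] [DecidableEq n] (f : ℝ → ℝ)
    {A : Matrix n n ℂ} (hA : A.IsHermitian) :
    (Matrix.trace (matFun f A)).re = ∑ i, f (hA.eigenvalues i) := by
  have hU : star (hA.eigenvectorUnitary : Matrix n n ℂ) * (hA.eigenvectorUnitary : Matrix n n ℂ)
      = 1 := hA.eigenvectorUnitary.2.1
  rw [matFun, dif_pos hA, Matrix.trace_mul_cycle, hU, Matrix.one_mul, Matrix.trace_diagonal]
  simp

lemma eig_congr {n : Type*} [Fintype n] [DecidableEq n] {A B : Matrix n n ℂ} (h : A = B)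
    (hA : A.IsHermitian) (hB : B.IsHermitian) : hA.eigenvalues = hB.eigenvalues := by
  subst h; rfl

/-- Parseval identity for an orthonormal basis. -/
lemma parseval_sum {ι : Type*} [Fintype ι] {E : Type*}
    [NormedAddCommGroup E] [InnerProductSpace ℂ E]
    (b : OrthonormalBasis ι ℂ E) (w : E) :
    ∑ i, ‖(inner ℂ (b i) w : ℂ)‖ ^ 2 = ‖w‖ ^ 2 := by
  have h := b.sum_inner_mul_inner w w
  have h2 : ∀ i, (inner ℂ w (b i) : ℂ) * inner ℂ (b i) w = ((‖(inner ℂ (b i) w : ℂ)‖ : ℂ)^2) := by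
    intro i
    rw [← inner_conj_symm w (b i), RCLike.conj_mul]; norm_cast
  rw [Finset.sum_congr rfl (fun i _ => h2 i), inner_self_eq_norm_sq_to_K] at h
  exact Complex.ofReal_injective (by push_cast; exact h)

lemma toEuclideanLin_eigen {n : Type*} [Fintype n] [DecidableEq n] {A : Matrix n n ℂ}
    (hA : A.IsHermitian) (i : n) :
    Matrix.toEuclideanLin A (hA.eigenvectorBasis i) = hA.eigenvalues i • hA.eigenvectorBasis i := by
  have h := hA.mulVec_eigenvectorBasis i
  simp only [Matrix.toEuclideanLin_apply, h, WithLp.toLp_smul, WithLp.toLp_ofLp]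


lemma inner_rsmul_left {E : Type*} [NormedAddCommGroup E] [InnerProductSpace ℂ E]
    (r : ℝ) (x y : E) : (inner ℂ (r • x) y : ℂ) = (r : ℂ) * inner ℂ x y := by
  rw [← Complex.coe_smul, inner_smul_left, Complex.conj_ofReal]

lemma inner_rsmul_right {E : Type*} [NormedAddCommGroup E] [InnerProductSpace ℂ E]
    (r : ℝ) (x y : E) : (inner ℂ x (r • y) : ℂ) = (r : ℂ) * inner ℂ x y := by
  rw [← Complex.coe_smul, inner_smul_right]

/-- Second-order Taylor-type estimate for a `C¹` function, uniform on `[-K, K]`. -/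
lemma taylor_est {f : ℝ → ℝ} (hf : ContDiff ℝ 1 f) (K : ℝ) {ε : ℝ} (hε : 0 < ε) :
    ∃ C : ℝ, 0 ≤ C ∧ ∀ x y : ℝ, |x| ≤ K → |y| ≤ K →
      |f y - f x - deriv f x * (y - x)| ≤ ε * |y - x| + C * (y - x) ^ 2 := by
  have hdiff : Differentiable ℝ f := hf.differentiable one_ne_zero
  have hcont : Continuous (deriv f) := hf.continuous_deriv le_rfl
  set s : Set ℝ := Set.Icc (-K) K with hs
  have hsc : IsCompact s := isCompact_Icc
  obtain ⟨M, hM⟩ := hsc.exists_bound_of_continuousOn hcont.continuousOn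
  set M' : ℝ := max M 0 with hM'
  have hM'0 : 0 ≤ M' := le_max_right _ _
  have hMb : ∀ z ∈ s, |deriv f z| ≤ M' := fun z hz => (hM z hz).trans (le_max_left _ _)
  have huc : UniformContinuousOn (deriv f) s :=
    hsc.uniformContinuousOn_of_continuous hcont.continuousOn
  obtain ⟨δ, hδ0, hδ⟩ := (Metric.uniformContinuousOn_iff).mp huc ε hε
  refine ⟨2 * M' / δ, by positivity, ?_⟩
  intro x y hx hy
  have hxs : x ∈ s := abs_le.mp hx |> fun h => ⟨h.1, h.2⟩
  have hys : y ∈ s := abs_le.mp hy |> fun h => ⟨h.1, h.2⟩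
  have hsub : Set.uIcc x y ⊆ s := Set.ordConnected_Icc.uIcc_subset hxs hys
  have habs : ∀ z ∈ Set.uIcc x y, |z - x| ≤ |y - x| := by
    intro z hz
    rw [Set.mem_uIcc] at hz
    have h1 := le_abs_self (y - x); have h2 := neg_abs_le (y - x)
    rcases hz with ⟨ha, hb⟩ | ⟨ha, hb⟩ <;> rw [abs_le] <;> constructor <;> linarith
  by_cases hcase : |y - x| < δ
  · have hg : ∀ z ∈ Set.uIcc x y, DifferentiableAt ℝ (fun z => f z - deriv f x * z) z :=
      fun z _ => (hdiff z).sub ((differentiable_id.const_mul _) z)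
    have hgd : ∀ z, deriv (fun z => f z - deriv f x * z) z = deriv f z - deriv f x := by
      intro z
      have h1 : HasDerivAt (fun z : ℝ => deriv f x * z) (deriv f x) z := by
        simpa using (hasDerivAt_id z).const_mul (deriv f x)
      exact ((hdiff z).hasDerivAt.sub h1).deriv
    have hbound : ∀ z ∈ Set.uIcc x y, ‖deriv (fun z => f z - deriv f x * z) z‖ ≤ ε := by
      intro z hz
      rw [hgd z, Real.norm_eq_abs]
      have hzs : z ∈ s := hsub hz
      have := hδ z hzs x hxs (by rw [Real.dist_eq]; exact lt_of_le_of_lt (habs z hz) hcase)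
      rw [Real.dist_eq] at this
      exact this.le
    have := (convex_uIcc x y).norm_image_sub_le_of_norm_deriv_le hg hbound
      (Set.left_mem_uIcc) (Set.right_mem_uIcc)
    rw [Real.norm_eq_abs, Real.norm_eq_abs] at this
    have heq : f y - deriv f x * y - (f x - deriv f x * x) = f y - f x - deriv f x * (y - x) := by
      ring
    rw [heq] at this
    have : |f y - f x - deriv f x * (y - x)| ≤ ε * |y - x| := this
    nlinarith [sq_nonneg (y - x), mul_nonneg hM'0 (sq_nonneg (y - x)), hδ0.le,
      div_nonneg (mul_nonneg (by norm_num : (0:ℝ) ≤ 2) hM'0) hδ0.le]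
  · push_neg at hcase
    have hlip : |f y - f x| ≤ M' * |y - x| := by
      have hg : ∀ z ∈ Set.uIcc x y, DifferentiableAt ℝ f z := fun z _ => hdiff z
      have hbound : ∀ z ∈ Set.uIcc x y, ‖deriv f z‖ ≤ M' := by
        intro z hz; rw [Real.norm_eq_abs]; exact hMb z (hsub hz)
      have := (convex_uIcc x y).norm_image_sub_le_of_norm_deriv_le hg hbound
        (Set.left_mem_uIcc) (Set.right_mem_uIcc)
      simpa [Real.norm_eq_abs] using this
    have h2 : |f y - f x - deriv f x * (y - x)| ≤ 2 * M' * |y - x| := by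
      have h3 : |deriv f x * (y - x)| ≤ M' * |y - x| := by
        rw [abs_mul]; exact mul_le_mul_of_nonneg_right (hMb x hxs) (abs_nonneg _)
      calc |f y - f x - deriv f x * (y - x)| ≤ |f y - f x| + |deriv f x * (y - x)| := abs_sub _ _
        _ ≤ 2 * M' * |y - x| := by linarith
    have h4 : 2 * M' * |y - x| ≤ 2 * M' / δ * (y - x) ^ 2 := by
      rw [div_mul_eq_mul_div, le_div_iff₀ hδ0]
      have : (y - x) ^ 2 = |y - x| ^ 2 := (sq_abs _).symm
      nlinarith [abs_nonneg (y - x), mul_le_mul_of_nonneg_left hcase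
        (mul_nonneg (mul_nonneg (by norm_num : (0:ℝ) ≤ 2) hM'0) (abs_nonneg (y - x)))]
    have h5 : 0 ≤ ε * |y - x| := mul_nonneg hε.le (abs_nonneg _)
    linarith

end Aux

set_option maxHeartbeats 2000000 in
open scoped InnerProductSpace in
/-- First-order trace formula: for Hermitian matrices `H₀` (with eigenvalues `μᵢ` and
orthonormal eigenbasis `ψᵢ`) and `V`, and `f` continuously differentiable,
`(d/dt)|_{t=0} Tr f(H₀ + tV) = ∑ᵢ f'(μᵢ)·⟨Vψᵢ, ψᵢ⟩`. -/
theorem trace_deriv_first_order {n : Type*} [Fintype n] [DecidableEq n]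
    (H₀ V : Matrix n n ℂ) (hH₀ : H₀.IsHermitian) (hV : V.IsHermitian)
    (f : ℝ → ℝ) (hf : ContDiff ℝ 1 f) :
    HasDerivAt (fun t : ℝ => (Matrix.trace (matFun f (H₀ + (t : ℂ) • V))).re)
      (∑ i, deriv f (hH₀.eigenvalues i) *
        (inner ℂ (Matrix.toEuclideanLin V (hH₀.eigenvectorBasis i))
          (hH₀.eigenvectorBasis i) : ℂ).re) 0 := by
  classical
  have hH : ∀ t : ℝ, (H₀ + (t : ℂ) • V).IsHermitian := by
    intro t
    refine hH₀.add ?_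
    rw [Matrix.IsHermitian, Matrix.conjTranspose_smul, hV.eq]
    simp [Complex.star_def, Complex.conj_ofReal]
  have hgfun : (fun t : ℝ => (Matrix.trace (matFun f (H₀ + (t : ℂ) • V))).re)
      = fun t : ℝ => ∑ i, f ((hH t).eigenvalues i) := funext fun t => traceMatFun f (hH t)
  rw [hgfun]
  set ψ : OrthonormalBasis n ℂ (EuclideanSpace ℂ n) := hH₀.eigenvectorBasis with hψdef
  set μ : n → ℝ := hH₀.eigenvalues with hμdef
  set TV : EuclideanSpace ℂ n →ₗ[ℂ] EuclideanSpace ℂ n := Matrix.toEuclideanLin V with hTVdef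
  set D : ℝ := ∑ i, deriv f (μ i) * (inner ℂ (TV (ψ i)) (ψ i) : ℂ).re with hDdef
  set T0 : EuclideanSpace ℂ n →ₗ[ℂ] EuclideanSpace ℂ n := Matrix.toEuclideanLin H₀ with hT0def
  -- continuous versions for operator norms
  set T0c : EuclideanSpace ℂ n →L[ℂ] EuclideanSpace ℂ n := LinearMap.toContinuousLinearMap T0
    with hT0c
  set TVc : EuclideanSpace ℂ n →L[ℂ] EuclideanSpace ℂ n := LinearMap.toContinuousLinearMap TV
    with hTVc
  set K : ℝ := ‖T0c‖ + ‖TVc‖ with hK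
  have hK0 : 0 ≤ K := add_nonneg (norm_nonneg _) (norm_nonneg _)
  have hψnorm : ∀ j, ‖ψ j‖ = 1 := fun j => ψ.orthonormal.1 j
  have heig0 : ∀ j, T0 (ψ j) = μ j • ψ j := fun j => toEuclideanLin_eigen hH₀ j
  have hψinner : ∀ j, (inner ℂ (ψ j) (ψ j) : ℂ) = 1 := by
    intro j
    rw [inner_self_eq_norm_sq_to_K, hψnorm j]; norm_num
  -- value at zero
  have h00 : H₀ + ((0 : ℝ) : ℂ) • V = H₀ := by norm_num
  have hF0 : ∑ i, f ((hH 0).eigenvalues i) = ∑ j, f (μ j) := by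
    rw [hμdef]
    exact Finset.sum_congr rfl fun i _ => by rw [eig_congr h00 (hH 0) hH₀]
  -- constants
  set C₁ : ℝ := ∑ j, ‖TV (ψ j)‖ with hC₁
  set C₂ : ℝ := ∑ j, ‖TV (ψ j)‖ ^ 2 with hC₂
  have hC₁0 : 0 ≤ C₁ := Finset.sum_nonneg fun j _ => norm_nonneg _
  have hC₂0 : 0 ≤ C₂ := Finset.sum_nonneg fun j _ => sq_nonneg _
  -- The key per-t estimate
  have key : ∀ t : ℝ, |t| ≤ 1 → ∀ ε' C : ℝ, 0 ≤ ε' → 0 ≤ C →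
      (∀ x y : ℝ, |x| ≤ K → |y| ≤ K →
        |f y - f x - deriv f x * (y - x)| ≤ ε' * |y - x| + C * (y - x) ^ 2) →
      |(∑ i, f ((hH t).eigenvalues i)) - (∑ j, f (μ j)) - t * D|
        ≤ ε' * |t| * C₁ + C * t ^ 2 * C₂ := by
    intro t ht ε' C hε'0 hC0 hR
    set lam : n → ℝ := (hH t).eigenvalues with hlamdef
    set φ : OrthonormalBasis n ℂ (EuclideanSpace ℂ n) := (hH t).eigenvectorBasis with hφdef
    set T : EuclideanSpace ℂ n →ₗ[ℂ] EuclideanSpace ℂ n := Matrix.toEuclideanLin (H₀ + (t : ℂ) • V)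
      with hTdef
    have hφnorm : ∀ i, ‖φ i‖ = 1 := fun i => φ.orthonormal.1 i
    have hφinner : ∀ i, (inner ℂ (φ i) (φ i) : ℂ) = 1 := by
      intro i; rw [inner_self_eq_norm_sq_to_K, hφnorm i]; norm_num
    have heig : ∀ i, T (φ i) = lam i • φ i := fun i => toEuclideanLin_eigen (hH t) i
    have hsym : T.IsSymmetric := Matrix.isHermitian_iff_isSymmetric.mp (hH t)
    have hsplit : ∀ x, T x = T0 x + (t : ℂ) • TV x := by
      intro x
      rw [hTdef, hT0def, hTVdef, map_add, map_smul]
      simp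
    set c : n → n → ℝ := fun i j => ‖(inner ℂ (φ i) (ψ j) : ℂ)‖ ^ 2 with hcdef
    have hc0 : ∀ i j, 0 ≤ c i j := fun i j => sq_nonneg _
    have hcol : ∀ j, ∑ i, c i j = 1 := by
      intro j
      simp only [hcdef]
      rw [parseval_sum φ (ψ j), hψnorm j, one_pow]
    have hrow : ∀ i, ∑ j, c i j = 1 := by
      intro i
      have h := parseval_sum ψ (φ i)
      rw [hφnorm i, one_pow] at h
      rw [← h]
      refine Finset.sum_congr rfl fun j _ => ?_
      simp only [hcdef]
      rw [norm_inner_symm]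
    have ha : ∀ i j, (inner ℂ (φ i) (T (ψ j)) : ℂ) = (lam i : ℂ) * (inner ℂ (φ i) (ψ j) : ℂ) := by
      intro i j
      rw [← hsym (φ i) (ψ j), heig i, inner_rsmul_left]
    have hTψ : ∀ j, T (ψ j) = μ j • ψ j + (t : ℂ) • TV (ψ j) := by
      intro j; rw [hsplit, heig0]
    have hE1 : ∀ j, ((∑ i, c i j * lam i : ℝ) : ℂ) = inner ℂ (ψ j) (T (ψ j)) := by
      intro j
      rw [← φ.sum_inner_mul_inner (ψ j) (T (ψ j)), Complex.ofReal_sum]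
      refine Finset.sum_congr rfl fun i _ => ?_
      rw [ha i j, ← inner_conj_symm (φ i) (ψ j), mul_comm ((lam i : ℂ)) _, ← mul_assoc,
        RCLike.mul_conj]
      simp only [hcdef]
      rw [norm_inner_symm (φ i) (ψ j)]
      push_cast
      rfl
    have hE2 : ∀ j, (inner ℂ (ψ j) (T (ψ j)) : ℂ)
        = (μ j : ℂ) + (t : ℂ) * inner ℂ (ψ j) (TV (ψ j)) := by
      intro j
      rw [hTψ j, inner_add_right, inner_smul_right, inner_rsmul_right, hψinner j, mul_one]
    have hE : ∀ j, ∑ i, c i j * lam i = μ j + t * (inner ℂ (TV (ψ j)) (ψ j) : ℂ).re := by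
      intro j
      have h := congrArg Complex.re ((hE1 j).trans (hE2 j))
      have hre : ((t : ℂ) * (inner ℂ (ψ j) (TV (ψ j)) : ℂ)).re
          = t * (inner ℂ (TV (ψ j)) (ψ j) : ℂ).re := by
        rw [← inner_conj_symm (ψ j) (TV (ψ j))]
        simp only [Complex.re_ofReal_mul, Complex.conj_re]
      rw [Complex.ofReal_re, Complex.add_re, Complex.ofReal_re, hre] at h
      exact h
    have hwj : ∀ j, T (ψ j) - μ j • ψ j = (t : ℂ) • TV (ψ j) := by
      intro j; rw [hTψ j]; abel
    have hainner : ∀ i j, (inner ℂ (φ i) (T (ψ j) - μ j • ψ j) : ℂ)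
        = ((lam i - μ j : ℝ) : ℂ) * (inner ℂ (φ i) (ψ j) : ℂ) := by
      intro i j
      rw [inner_sub_right, ha i j, inner_rsmul_right, ← sub_mul]
      norm_cast
    have hvar : ∀ j, ∑ i, c i j * (lam i - μ j) ^ 2 = t ^ 2 * ‖TV (ψ j)‖ ^ 2 := by
      intro j
      calc ∑ i, c i j * (lam i - μ j) ^ 2
          = ∑ i, ‖(inner ℂ (φ i) (T (ψ j) - μ j • ψ j) : ℂ)‖ ^ 2 := by
            refine Finset.sum_congr rfl fun i _ => ?_
            rw [hainner i j, norm_mul, Complex.norm_real, Real.norm_eq_abs, mul_pow, sq_abs]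
            simp only [hcdef]
            ring
        _ = ‖T (ψ j) - μ j • ψ j‖ ^ 2 := parseval_sum φ _
        _ = ‖(t : ℂ) • TV (ψ j)‖ ^ 2 := by rw [hwj j]
        _ = t ^ 2 * ‖TV (ψ j)‖ ^ 2 := by
            rw [norm_smul, Complex.norm_real, Real.norm_eq_abs, mul_pow, sq_abs]
    have hCS : ∀ j, ∑ i, c i j * |lam i - μ j| ≤ |t| * ‖TV (ψ j)‖ := by
      intro j
      have hsq := Finset.sum_sq_le_sum_mul_sum_of_sq_eq_mul Finset.univ
        (r := fun i => c i j * |lam i - μ j|)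
        (f := fun i => c i j) (g := fun i => c i j * (lam i - μ j) ^ 2)
        (fun i _ => hc0 i j) (fun i _ => mul_nonneg (hc0 i j) (sq_nonneg _))
        (fun i _ => by rw [mul_pow, sq_abs]; ring)
      rw [hcol j, hvar j, one_mul] at hsq
      have h1 : (0:ℝ) ≤ ∑ i, c i j * |lam i - μ j| :=
        Finset.sum_nonneg fun i _ => mul_nonneg (hc0 i j) (abs_nonneg _)
      have h2 : t ^ 2 * ‖TV (ψ j)‖ ^ 2 = (|t| * ‖TV (ψ j)‖) ^ 2 := by
        rw [mul_pow, sq_abs]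
      rw [h2] at hsq
      calc ∑ i, c i j * |lam i - μ j|
          = Real.sqrt ((∑ i, c i j * |lam i - μ j|) ^ 2) := (Real.sqrt_sq h1).symm
        _ ≤ Real.sqrt ((|t| * ‖TV (ψ j)‖) ^ 2) := Real.sqrt_le_sqrt hsq
        _ = |t| * ‖TV (ψ j)‖ := Real.sqrt_sq (by positivity)
    have hbμ : ∀ j, |μ j| ≤ K := by
      intro j
      have h1 : ((μ j : ℝ) : ℂ) = inner ℂ (ψ j) (T0 (ψ j)) := by
        rw [heig0 j, inner_rsmul_right, hψinner j, mul_one]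
      have h2 : |μ j| = ‖((μ j : ℝ) : ℂ)‖ := ((Complex.norm_real _).trans (Real.norm_eq_abs _)).symm
      rw [h2, h1]
      calc ‖(inner ℂ (ψ j) (T0 (ψ j)) : ℂ)‖ ≤ ‖ψ j‖ * ‖T0 (ψ j)‖ := norm_inner_le_norm _ _
        _ = ‖T0c (ψ j)‖ := by rw [hψnorm j, one_mul]; rfl
        _ ≤ ‖T0c‖ * ‖ψ j‖ := T0c.le_opNorm _
        _ ≤ K := by
            rw [hψnorm j, mul_one, hK]
            exact le_add_of_nonneg_right (norm_nonneg _)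
    have hblam : ∀ i, |lam i| ≤ K := by
      intro i
      have h1 : ((lam i : ℝ) : ℂ) = inner ℂ (φ i) (T (φ i)) := by
        rw [heig i, inner_rsmul_right, hφinner i, mul_one]
      have h2 : |lam i| = ‖((lam i : ℝ) : ℂ)‖ := ((Complex.norm_real _).trans (Real.norm_eq_abs _)).symm
      rw [h2, h1]
      calc ‖(inner ℂ (φ i) (T (φ i)) : ℂ)‖ ≤ ‖φ i‖ * ‖T (φ i)‖ := norm_inner_le_norm _ _
        _ = ‖T (φ i)‖ := by rw [hφnorm i, one_mul]
        _ = ‖T0 (φ i) + (t : ℂ) • TV (φ i)‖ := by rw [hsplit]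
        _ ≤ ‖T0 (φ i)‖ + ‖(t : ℂ) • TV (φ i)‖ := norm_add_le _ _
        _ = ‖T0c (φ i)‖ + |t| * ‖TVc (φ i)‖ := by
            rw [norm_smul, Complex.norm_real, Real.norm_eq_abs]; rfl
        _ ≤ ‖T0c‖ * ‖φ i‖ + 1 * (‖TVc‖ * ‖φ i‖) := by
            refine add_le_add (T0c.le_opNorm _) ?_
            exact mul_le_mul ht (TVc.le_opNorm _) (by positivity) zero_le_one
        _ ≤ K := by
            rw [hφnorm i, mul_one, mul_one, one_mul, hK]
    have herr : (∑ i, f (lam i)) - (∑ j, f (μ j)) - t * D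
        = ∑ j, ∑ i, c i j * (f (lam i) - f (μ j) - deriv f (μ j) * (lam i - μ j)) := by
      have e1 : ∑ i, f (lam i) = ∑ j, ∑ i, c i j * f (lam i) := by
        rw [Finset.sum_comm]
        refine Finset.sum_congr rfl fun i _ => ?_
        rw [← Finset.sum_mul, hrow i, one_mul]
      have e2 : ∑ j, f (μ j) = ∑ j, ∑ i, c i j * f (μ j) := by
        refine Finset.sum_congr rfl fun j _ => ?_
        rw [← Finset.sum_mul, hcol j, one_mul]
      have e3 : t * D = ∑ j, ∑ i, c i j * (deriv f (μ j) * (lam i - μ j)) := by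
        rw [hDdef, Finset.mul_sum]
        refine Finset.sum_congr rfl fun j _ => ?_
        have hs : ∑ i, c i j * (lam i - μ j) = t * (inner ℂ (TV (ψ j)) (ψ j) : ℂ).re := by
          have hsplit2 : ∑ i, c i j * (lam i - μ j) = (∑ i, c i j * lam i) - μ j := by
            simp only [mul_sub]
            rw [Finset.sum_sub_distrib, ← Finset.sum_mul, hcol j, one_mul]
          rw [hsplit2, hE j]; ring
        calc t * (deriv f (μ j) * (inner ℂ (TV (ψ j)) (ψ j) : ℂ).re)
            = deriv f (μ j) * (∑ i, c i j * (lam i - μ j)) := by rw [hs]; ring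
          _ = ∑ i, c i j * (deriv f (μ j) * (lam i - μ j)) := by
              rw [Finset.mul_sum]
              exact Finset.sum_congr rfl fun i _ => by ring
      rw [e1, e2, e3, ← Finset.sum_sub_distrib, ← Finset.sum_sub_distrib]
      refine Finset.sum_congr rfl fun j _ => ?_
      rw [← Finset.sum_sub_distrib, ← Finset.sum_sub_distrib]
      exact Finset.sum_congr rfl fun i _ => by ring
    rw [herr]
    calc |∑ j, ∑ i, c i j * (f (lam i) - f (μ j) - deriv f (μ j) * (lam i - μ j))|
        ≤ ∑ j, |∑ i, c i j * (f (lam i) - f (μ j) - deriv f (μ j) * (lam i - μ j))| :=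
          Finset.abs_sum_le_sum_abs _ _
      _ ≤ ∑ j, (ε' * (|t| * ‖TV (ψ j)‖) + C * (t ^ 2 * ‖TV (ψ j)‖ ^ 2)) := by
          refine Finset.sum_le_sum fun j _ => ?_
          calc |∑ i, c i j * (f (lam i) - f (μ j) - deriv f (μ j) * (lam i - μ j))|
              ≤ ∑ i, |c i j * (f (lam i) - f (μ j) - deriv f (μ j) * (lam i - μ j))| :=
                Finset.abs_sum_le_sum_abs _ _
            _ = ∑ i, c i j * |f (lam i) - f (μ j) - deriv f (μ j) * (lam i - μ j)| := by
                refine Finset.sum_congr rfl fun i _ => ?_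
                rw [abs_mul, abs_of_nonneg (hc0 i j)]
            _ ≤ ∑ i, c i j * (ε' * |lam i - μ j| + C * (lam i - μ j) ^ 2) :=
                Finset.sum_le_sum fun i _ => mul_le_mul_of_nonneg_left
                  (hR (μ j) (lam i) (hbμ j) (hblam i)) (hc0 i j)
            _ = ε' * (∑ i, c i j * |lam i - μ j|) + C * (∑ i, c i j * (lam i - μ j) ^ 2) := by
                rw [Finset.mul_sum, Finset.mul_sum, ← Finset.sum_add_distrib]
                exact Finset.sum_congr rfl fun i _ => by ring
            _ ≤ ε' * (|t| * ‖TV (ψ j)‖) + C * (t ^ 2 * ‖TV (ψ j)‖ ^ 2) := by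
                rw [hvar j]
                exact add_le_add (mul_le_mul_of_nonneg_left (hCS j) hε'0) le_rfl
      _ = ε' * |t| * C₁ + C * t ^ 2 * C₂ := by
          rw [Finset.sum_add_distrib, ← Finset.mul_sum, ← Finset.mul_sum, ← Finset.mul_sum,
            ← Finset.mul_sum, hC₁, hC₂]
          ring
  -- conclude
  rw [hasDerivAt_iff_isLittleO]
  rw [Asymptotics.isLittleO_iff]
  intro c hc
  set ε' : ℝ := c / (2 * (C₁ + 1)) with hε'
  have hε'pos : 0 < ε' := by positivity
  obtain ⟨C, hC0, hR⟩ := taylor_est hf K hε'pos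
  set δ₀ : ℝ := min 1 (c / (2 * (C * C₂ + 1))) with hδ₀
  have hδ₀pos : 0 < δ₀ := lt_min one_pos (by positivity)
  have hev : ∀ᶠ t in nhds (0 : ℝ), |t| < δ₀ := by
    have := Metric.ball_mem_nhds (0 : ℝ) hδ₀pos
    filter_upwards [this] with t ht
    simpa [Real.dist_eq] using ht
  filter_upwards [hev] with t ht
  have ht1 : |t| ≤ 1 := le_of_lt (lt_of_lt_of_le ht (min_le_left _ _))
  have hkey := key t ht1 ε' C hε'pos.le hC0 hR
  simp only [sub_zero, smul_eq_mul, Real.norm_eq_abs]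
  rw [hF0]
  have hb1 : ε' * |t| * C₁ ≤ c / 2 * |t| := by
    have h1 : ε' * C₁ ≤ c / 2 := by
      rw [hε', div_mul_eq_mul_div, div_le_div_iff₀ (by positivity) (by norm_num : (0:ℝ) < 2)]
      nlinarith [hc.le, hC₁0]
    calc ε' * |t| * C₁ = (ε' * C₁) * |t| := by ring
      _ ≤ c / 2 * |t| := mul_le_mul_of_nonneg_right h1 (abs_nonneg t)
  have hb2 : C * t ^ 2 * C₂ ≤ c / 2 * |t| := by
    have htsq : t ^ 2 = |t| * |t| := by rw [← sq_abs]; ring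
    have ht2 : |t| ≤ c / (2 * (C * C₂ + 1)) := le_of_lt (lt_of_lt_of_le ht (min_le_right _ _))
    have h1 : C * C₂ * |t| ≤ c / 2 := by
      have h2 : C * C₂ * |t| ≤ C * C₂ * (c / (2 * (C * C₂ + 1))) :=
        mul_le_mul_of_nonneg_left ht2 (by positivity)
      have h3 : C * C₂ * (c / (2 * (C * C₂ + 1))) ≤ c / 2 := by
        rw [← mul_div_assoc, div_le_div_iff₀ (by positivity) (by norm_num : (0:ℝ) < 2)]
        nlinarith [mul_nonneg (mul_nonneg hC0 hC₂0) hc.le]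
      linarith
    calc C * t ^ 2 * C₂ = (C * C₂ * |t|) * |t| := by rw [htsq]; ring
      _ ≤ c / 2 * |t| := mul_le_mul_of_nonneg_right h1 (abs_nonneg t)
  calc |(∑ i, f ((hH t).eigenvalues i)) - (∑ j, f (μ j)) - t * D|
      ≤ ε' * |t| * C₁ + C * t ^ 2 * C₂ := hkey
    _ ≤ c / 2 * |t| + c / 2 * |t| := add_le_add hb1 hb2
    _ = c * |t| := by ring
end

section
/- Let H₀ be a self-adjoint n×n matrix and V a self-adjoint n×n matrix, and let f : ℝ → ℝ be C³ with compact support in (a,b). Define ξ(λ) = (number of eigenvalues of H₀ in (a,λ]) − (number of eigenvalues of H₀+V in (a,λ]), counting multiplicities. Then Tr f(H₀+V) − Tr f(H₀) = ∫_a^b f'(λ) ξ(λ) dλ. -/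
open MeasureTheory Set

lemma trace_matFun {n : Type*} [Fintype n] [DecidableEq n] (f : ℝ → ℝ) (A : Matrix n n ℂ)
    (hA : A.IsHermitian) :
    Matrix.trace (matFun f A) = ∑ i, (f (hA.eigenvalues i) : ℂ) := by
  rw [matFun, dif_pos hA, Matrix.trace_mul_comm, ← Matrix.mul_assoc]
  simp [Matrix.trace_diagonal]

lemma keyInt (a b μ : ℝ) (f : ℝ → ℝ) (hf : ContDiff ℝ 3 f) :
    IntervalIntegrable (fun l => deriv f l * (if μ ∈ Set.Ioc a l then (1:ℝ) else 0)) volume a b := by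
  have hd : Continuous (deriv f) := hf.continuous_deriv (by norm_num)
  by_cases hμa : a < μ
  · have heq : (fun l => deriv f l * (if μ ∈ Set.Ioc a l then (1:ℝ) else 0)) =
        Set.indicator (Set.Ici μ) (deriv f) := by
      funext l
      by_cases h : μ ≤ l <;> simp [Set.indicator, Set.mem_Ioc, hμa, h]
    rw [heq]
    exact ⟨((hd.intervalIntegrable a b).1).indicator measurableSet_Ici,
      ((hd.intervalIntegrable a b).2).indicator measurableSet_Ici⟩
  · have heq : (fun l => deriv f l * (if μ ∈ Set.Ioc a l then (1:ℝ) else 0)) = fun _ => 0 := by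
      funext l; simp [Set.mem_Ioc, hμa]
    rw [heq]; exact intervalIntegrable_const

lemma keyVal (a b μ : ℝ) (hab : a < b) (f : ℝ → ℝ) (hf : ContDiff ℝ 3 f)
    (hsupp : tsupport f ⊆ Set.Ioo a b) :
    (∫ l in a..b, deriv f l * (if μ ∈ Set.Ioc a l then (1:ℝ) else 0)) = - f μ := by
  have hd : Continuous (deriv f) := hf.continuous_deriv (by norm_num)
  have hfb : f b = 0 := by
    apply image_eq_zero_of_notMem_tsupport
    intro h; exact absurd (hsupp h).2 (lt_irrefl b)
  by_cases hμa : a < μ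
  · have heq : ∀ l, deriv f l * (if μ ∈ Set.Ioc a l then (1:ℝ) else 0) =
        Set.indicator (Set.Ici μ) (deriv f) l := by
      intro l
      by_cases h : μ ≤ l <;> simp [Set.indicator, Set.mem_Ioc, hμa, h]
    simp only [heq]
    by_cases hμb : μ ≤ b
    · have hint : ∀ x y : ℝ, IntervalIntegrable (Set.indicator (Set.Ici μ) (deriv f)) volume x y :=
        fun x y => ⟨((hd.intervalIntegrable x y).1).indicator measurableSet_Ici,
          ((hd.intervalIntegrable x y).2).indicator measurableSet_Ici⟩
      rw [← intervalIntegral.integral_add_adjacent_intervals (hint a μ) (hint μ b)]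
      have h1 : (∫ l in a..μ, Set.indicator (Set.Ici μ) (deriv f) l) = 0 := by
        rw [intervalIntegral.integral_congr_ae (g := fun _ => (0:ℝ))]
        · simp
        · have hae : ∀ᵐ x ∂(volume : Measure ℝ), x ≠ μ := by
            rw [MeasureTheory.ae_iff]
            simp [measure_singleton (μ := (volume : Measure ℝ)) μ]
          filter_upwards [hae] with x hx hmem
          rw [Set.uIoc_of_le hμa.le] at hmem
          have : x < μ := lt_of_le_of_ne hmem.2 hx
          simp [Set.indicator, not_le.mpr this]
      have h2 : (∫ l in μ..b, Set.indicator (Set.Ici μ) (deriv f) l) = - f μ := by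
        rw [intervalIntegral.integral_congr (g := deriv f)]
        · rw [intervalIntegral.integral_deriv_eq_sub
            (fun x _ => (hf.differentiable (by norm_num)).differentiableAt)
            (hd.intervalIntegrable μ b)]
          rw [hfb]; ring
        · intro x hx
          rw [Set.uIcc_of_le hμb] at hx
          simp [Set.indicator, hx.1]
      rw [h1, h2, zero_add]
    · have hfμ : f μ = 0 := by
        apply image_eq_zero_of_notMem_tsupport
        intro h; exact hμb ((hsupp h).2.le)
      rw [intervalIntegral.integral_congr (g := fun _ => (0:ℝ))]
      · simp [hfμ]
      · intro x hx
        rw [Set.uIcc_of_le hab.le] at hx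
        have : x < μ := lt_of_le_of_lt hx.2 (not_le.mp hμb)
        simp [Set.indicator, not_le.mpr this]
  · have hfμ : f μ = 0 := by
      apply image_eq_zero_of_notMem_tsupport
      intro h; exact hμa (hsupp h).1
    have heq : ∀ l, deriv f l * (if μ ∈ Set.Ioc a l then (1:ℝ) else 0) = 0 := by
      intro l; simp [Set.mem_Ioc, hμa]
    simp only [heq, hfμ, intervalIntegral.integral_zero, neg_zero]

lemma ncard_eq_sum {n : Type*} [Fintype n] (μ : n → ℝ) (a l : ℝ) :
    (({i | μ i ∈ Set.Ioc a l}.ncard : ℝ)) = ∑ i, (if μ i ∈ Set.Ioc a l then (1:ℝ) else 0) := by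
  classical
  rw [Set.ncard_eq_toFinset_card', Set.toFinset_setOf, Finset.card_filter]
  push_cast
  exact Finset.sum_congr rfl fun i _ => by by_cases h : μ i ∈ Set.Ioc a l <;> simp [h]

/-- Finite-dimensional Krein trace formula: for Hermitian `n×n` matrices `H₀` and `V` and
`f : ℝ → ℝ` of class `C³` compactly supported in `(a,b)`, with
`ξ(λ) = #{eigenvalues of H₀ in (a,λ]} − #{eigenvalues of H₀+V in (a,λ]}` (with multiplicity),
one has `Tr f(H₀+V) − Tr f(H₀) = ∫_a^b f'(λ) ξ(λ) dλ`. -/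
theorem trace_diff_eq_integral_spectralShift_matrix
    {n : Type*} [Fintype n] [DecidableEq n]
    (H₀ V : Matrix n n ℂ) (hH₀ : H₀.IsHermitian) (hV : V.IsHermitian)
    (hS : (H₀ + V).IsHermitian)
    (a b : ℝ) (f : ℝ → ℝ) (hf : ContDiff ℝ 3 f)
    (hsupp : tsupport f ⊆ Set.Ioo a b) :
    (Matrix.trace (matFun f (H₀ + V))).re - (Matrix.trace (matFun f H₀)).re =
      ∫ l in a..b, deriv f l *
        (({i | hH₀.eigenvalues i ∈ Set.Ioc a l}.ncard : ℝ) -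
          ({i | hS.eigenvalues i ∈ Set.Ioc a l}.ncard : ℝ)) := by
  rw [trace_matFun f _ hS, trace_matFun f _ hH₀]
  by_cases hab : a < b
  · have hinteg : ∀ l, deriv f l *
        (({i | hH₀.eigenvalues i ∈ Set.Ioc a l}.ncard : ℝ) -
          ({i | hS.eigenvalues i ∈ Set.Ioc a l}.ncard : ℝ)) =
        ∑ i, (deriv f l * (if hH₀.eigenvalues i ∈ Set.Ioc a l then (1:ℝ) else 0) -
              deriv f l * (if hS.eigenvalues i ∈ Set.Ioc a l then (1:ℝ) else 0)) := by
      intro l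
      rw [ncard_eq_sum, ncard_eq_sum, Finset.sum_sub_distrib]
      rw [mul_sub, Finset.mul_sum, Finset.mul_sum]
    simp only [hinteg]
    rw [intervalIntegral.integral_finset_sum (fun i _ =>
      (keyInt a b _ f hf).sub (keyInt a b _ f hf))]
    have : ∀ i : n, (∫ l in a..b,
        (deriv f l * (if hH₀.eigenvalues i ∈ Set.Ioc a l then (1:ℝ) else 0) -
         deriv f l * (if hS.eigenvalues i ∈ Set.Ioc a l then (1:ℝ) else 0))) =
        f (hS.eigenvalues i) - f (hH₀.eigenvalues i) := by
      intro i
      rw [intervalIntegral.integral_sub (keyInt a b _ f hf) (keyInt a b _ f hf),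
        keyVal a b _ hab f hf hsupp, keyVal a b _ hab f hf hsupp]
      ring
    rw [Finset.sum_congr rfl fun i _ => this i, Finset.sum_sub_distrib]
    simp [Complex.re_sum]
  · have hf0 : ∀ x, f x = 0 := by
      intro x
      apply image_eq_zero_of_notMem_tsupport
      intro h
      exact absurd (hsupp h) (by rw [Set.Ioo_eq_empty hab]; simp)
    have hf0' : f = fun _ => 0 := funext hf0
    have hderiv : deriv f = fun _ => 0 := by rw [hf0']; funext x; simp
    simp [hf0, hderiv]
end
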